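/- Let C : [0,1]² → [0,1] be a copula that is differentiable with respect to its second argument at v = 0 uniformly in u ∈ [0,1], i.e., sup_{u∈[0,1]} |C(u,v)/v − ∂₂C(u,0)| → 0 as v → 0⁺. Let (Cₙ) be a sequence of measurable functions [0,1]² → [0,1] and (vₙ) a sequence in (0,1] such that vₙ → 0 and (1/vₙ) · sup_{(u,v)∈[0,1]²} |Cₙ(u,v) − C(u,v)| → 0 as n → ∞. Then 1 − (1/vₙ) ∫₀¹ Cₙ(u,vₙ) du converges, as n → ∞, to 1 − ∫₀¹ ∂₂C(u,0) du. -/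

import Mathlib

open MeasureTheory Filter Set Topology

/-- A bivariate copula: boundary conditions and the 2-increasing property on `[0,1]²`. -/
def IsCopula (C : ℝ → ℝ → ℝ) : Prop :=
  (∀ u ∈ Set.Icc (0:ℝ) 1, C u 0 = 0 ∧ C 0 u = 0 ∧ C u 1 = u ∧ C 1 u = u) ∧
  (∀ u ∈ Set.Icc (0:ℝ) 1, ∀ v ∈ Set.Icc (0:ℝ) 1, C u v ∈ Set.Icc (0:ℝ) 1) ∧
  (∀ u₁ u₂ v₁ v₂ : ℝ, 0 ≤ u₁ → u₁ ≤ u₂ → u₂ ≤ 1 → 0 ≤ v₁ → v₁ ≤ v₂ → v₂ ≤ 1 →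
    0 ≤ C u₂ v₂ - C u₁ v₂ - C u₂ v₁ + C u₁ v₁)

/-- analytic core of Theorem 3.1, second part. If `C` is a copula that
is differentiable in its second argument at `v = 0` uniformly in `u` (with derivative
`g u = ∂₂C(u,0)`), `(Cₙ)` are `[0,1]`-valued measurable functions with
`(1/vₙ)·sup_{(u,v)} |Cₙ(u,v) − C(u,v)| → 0` and `vₙ → 0`, `vₙ ∈ (0,1]`, then
`1 − (1/vₙ)∫₀¹ Cₙ(u,vₙ) du → 1 − ∫₀¹ g(u) du`. -/
theorem tcte_deterministic_convergence
    (C : ℝ → ℝ → ℝ) (hC : IsCopula C)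
    (g : ℝ → ℝ)
    (hunif : ∀ ε > (0:ℝ), ∃ δ > (0:ℝ), ∀ v ∈ Set.Ioo (0:ℝ) δ, ∀ u ∈ Set.Icc (0:ℝ) 1,
      |C u v / v - g u| ≤ ε)
    (Cn : ℕ → ℝ → ℝ → ℝ)
    (hCnmeas : ∀ n, Measurable (fun p : ℝ × ℝ => Cn n p.1 p.2))
    (hCnrange : ∀ n, ∀ u ∈ Set.Icc (0:ℝ) 1, ∀ v ∈ Set.Icc (0:ℝ) 1,
      Cn n u v ∈ Set.Icc (0:ℝ) 1)
    (vseq : ℕ → ℝ) (hv : ∀ n, vseq n ∈ Set.Ioc (0:ℝ) 1)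
    (hv0 : Filter.Tendsto vseq Filter.atTop (𝓝 0))
    (hsup : Filter.Tendsto
      (fun n => (1/(vseq n)) *
        sSup ((fun p : ℝ × ℝ => |Cn n p.1 p.2 - C p.1 p.2|) ''
          (Set.Icc (0:ℝ) 1 ×ˢ Set.Icc (0:ℝ) 1)))
      Filter.atTop (𝓝 0)) :
    Filter.Tendsto (fun n => 1 - (1/(vseq n)) * ∫ u in (0:ℝ)..1, Cn n u (vseq n))
      Filter.atTop (𝓝 (1 - ∫ u in (0:ℝ)..1, g u)) := by

  -- `g` is monotone on `[0,1]`, hence interval integrable.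
  obtain ⟨hbdry, hrange, h2inc⟩ := hC
  have hzero : ∀ u ∈ Set.Icc (0:ℝ) 1, C u 0 = 0 := fun u hu => (hbdry u hu).1
  have hmono : MonotoneOn g (Set.Icc (0:ℝ) 1) := by
    intro u₁ hu₁ u₂ hu₂ h12
    refine le_of_forall_pos_le_add (fun ε hε => ?_)
    obtain ⟨δ, hδ, hδc⟩ := hunif (ε/2) (by linarith)
    set v : ℝ := min δ 1 / 2 with hv_def
    have hv0' : 0 < v := by positivity
    have hvδ : v < δ := by
      have h := min_le_left δ 1; rw [hv_def]; linarith
    have hv1 : v ≤ 1 := by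
      have h := min_le_right δ 1; rw [hv_def]; linarith
    have hle : C u₁ v ≤ C u₂ v := by
      have := h2inc u₁ u₂ 0 v hu₁.1 h12 hu₂.2 le_rfl hv0'.le hv1
      have e1 := hzero u₁ hu₁
      have e2 := hzero u₂ hu₂
      linarith
    have h1 := hδc v ⟨hv0', hvδ⟩ u₁ hu₁
    have h2 := hδc v ⟨hv0', hvδ⟩ u₂ hu₂
    rw [abs_le] at h1 h2
    have hdiv : C u₁ v / v ≤ C u₂ v / v := by gcongr
    linarith
  have hg_int : IntervalIntegrable g volume 0 1 := by
    have : MonotoneOn g (Set.uIcc (0:ℝ) 1) := by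
      rwa [Set.uIcc_of_le zero_le_one]
    exact this.intervalIntegrable
  -- each `Cn n (·, vseq n)` is interval integrable on `[0,1]`
  have hCn_int : ∀ n, IntervalIntegrable (fun u => Cn n u (vseq n)) volume 0 1 := by
    intro n
    rw [intervalIntegrable_iff_integrableOn_Ioc_of_le zero_le_one]
    have hmeas : Measurable (fun u => Cn n u (vseq n)) :=
      (hCnmeas n).comp (measurable_id.prodMk measurable_const)
    refine Measure.integrableOn_of_bounded (M := 1) (by simp) hmeas.aestronglyMeasurable ?_
    filter_upwards [ae_restrict_mem measurableSet_Ioc] with u hu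
    have hcn := hCnrange n u ⟨hu.1.le, hu.2⟩ (vseq n) ⟨(hv n).1.le, (hv n).2⟩
    rw [Real.norm_eq_abs, abs_le]
    exact ⟨by linarith [hcn.1], hcn.2⟩
  -- it suffices to show the integrals converge
  have key : Filter.Tendsto (fun n => (1/(vseq n)) * ∫ u in (0:ℝ)..1, Cn n u (vseq n))
      Filter.atTop (𝓝 (∫ u in (0:ℝ)..1, g u)) := by
    rw [Metric.tendsto_atTop]
    intro ε hε
    obtain ⟨δ, hδ, hδc⟩ := hunif (ε/3) (by linarith)
    have hev1 : ∀ᶠ n in Filter.atTop, vseq n < δ := hv0.eventually_lt_const hδ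
    have hev2 : ∀ᶠ n in Filter.atTop,
        (1/(vseq n)) * sSup ((fun p : ℝ × ℝ => |Cn n p.1 p.2 - C p.1 p.2|) ''
          (Set.Icc (0:ℝ) 1 ×ˢ Set.Icc (0:ℝ) 1)) < ε/3 :=
      hsup.eventually_lt_const (by linarith)
    obtain ⟨N, hN⟩ := (hev1.and hev2).exists_forall_of_atTop
    refine ⟨N, fun n hn => ?_⟩
    obtain ⟨hn1, hn2⟩ := hN n hn
    set v := vseq n with hvdef
    have hv0' : 0 < v := (hv n).1
    have hv1 : v ≤ 1 := (hv n).2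
    set S := sSup ((fun p : ℝ × ℝ => |Cn n p.1 p.2 - C p.1 p.2|) ''
      (Set.Icc (0:ℝ) 1 ×ˢ Set.Icc (0:ℝ) 1)) with hSdef
    have hbdd : BddAbove ((fun p : ℝ × ℝ => |Cn n p.1 p.2 - C p.1 p.2|) ''
        (Set.Icc (0:ℝ) 1 ×ˢ Set.Icc (0:ℝ) 1)) := by
      refine ⟨1, fun x hx => ?_⟩
      obtain ⟨p, hp, rfl⟩ := hx
      obtain ⟨hp1, hp2⟩ := hp
      have h1 := hCnrange n p.1 hp1 p.2 hp2
      have h2 := hrange p.1 hp1 p.2 hp2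
      rw [abs_le]
      constructor <;> [linarith [h1.1, h2.2]; linarith [h1.2, h2.1]]
    have hSle : ∀ u ∈ Set.Icc (0:ℝ) 1, |Cn n u v - C u v| ≤ S := by
      intro u hu
      exact le_csSup hbdd ⟨(u, v), ⟨hu, ⟨hv0'.le, hv1⟩⟩, rfl⟩
    -- rewrite the difference as an integral
    have hint1 : IntervalIntegrable (fun u => (1/v) * Cn n u v) volume 0 1 :=
      (hCn_int n).const_mul _
    have heq : (1/v) * (∫ u in (0:ℝ)..1, Cn n u v) - ∫ u in (0:ℝ)..1, g u
        = ∫ u in (0:ℝ)..1, ((1/v) * Cn n u v - g u) := by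
      rw [intervalIntegral.integral_sub hint1 hg_int, intervalIntegral.integral_const_mul]
    rw [Real.dist_eq, heq]
    have hbound : ∀ u ∈ Set.uIoc (0:ℝ) 1, ‖(1/v) * Cn n u v - g u‖ ≤ (1/v) * S + ε/3 := by
      intro u hu
      rw [Set.uIoc_of_le zero_le_one] at hu
      have hu' : u ∈ Set.Icc (0:ℝ) 1 := ⟨hu.1.le, hu.2⟩
      have h1 := hSle u hu'
      have h2 := hδc v ⟨hv0', hn1⟩ u hu'
      have hdecomp : (1/v) * Cn n u v - g u
          = (1/v) * (Cn n u v - C u v) + (C u v / v - g u) := by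
        field_simp
        ring
      rw [Real.norm_eq_abs, hdecomp]
      calc |(1/v) * (Cn n u v - C u v) + (C u v / v - g u)|
          ≤ |(1/v) * (Cn n u v - C u v)| + |C u v / v - g u| := abs_add_le _ _
        _ ≤ (1/v) * S + ε/3 := by
            rw [abs_mul, abs_of_pos (by positivity : (0:ℝ) < 1/v)]
            gcongr
    have := intervalIntegral.norm_integral_le_of_norm_le_const hbound
    simp only [Real.norm_eq_abs] at this
    have h1 : |1 - (0:ℝ)| = 1 := by norm_num
    rw [h1, mul_one] at this
    calc |∫ u in (0:ℝ)..1, ((1/v) * Cn n u v - g u)| ≤ (1/v) * S + ε/3 := this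
      _ < ε := by linarith
  have := key.const_sub 1
  exact this
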